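/- If for every symmetric bilinear form b : V × V → ℝ and all X, Y ∈ V one has b(X, B(Y)) = b(B(X), Y), then B is a scalar operator: there exists λ ∈ ℝ with B = λ·id_V. (The linear algebra lemma of §14: an operator symmetric with respect to all symmetric bilinear forms on a finite-dimensional real vector space is scalar.) -/
import Mathlib

/-- If every vector is an eigenvector of `B`, then `B` is scalar. -/
theorem aux_all_eigen (V : Type*) [AddCommGroup V] [Module ℝ V] (B : V →ₗ[ℝ] V)
    (h : ∀ v : V, ∃ c : ℝ, B v = c • v) : ∃ c : ℝ, B = c • LinearMap.id := by
  by_cases hV : ∃ v : V, v ≠ 0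
  · obtain ⟨v, hv⟩ := hV
    obtain ⟨c, hc⟩ := h v
    refine ⟨c, ?_⟩
    ext w
    obtain ⟨d, hd⟩ := h w
    simp only [LinearMap.smul_apply, LinearMap.id_coe, id_eq]
    rw [hd]
    by_cases hw : w = 0
    · simp [hw]
    suffices hdc : d = c by rw [hdc]
    by_cases hdep : ∃ a : ℝ, w = a • v
    · obtain ⟨a, rfl⟩ := hdep
      have ha : a ≠ 0 := by rintro rfl; simp at hw
      have h1 : (d * a) • v = (a * c) • v := by
        rw [← smul_smul, ← hd, map_smul, hc, smul_smul]
      have h2 : d * a = a * c := smul_left_injective ℝ hv h1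
      have := mul_right_cancel₀ ha (h2.trans (mul_comm a c))
      exact this
    · obtain ⟨e, he⟩ := h (v + w)
      rw [map_add, hc, hd] at he
      have key : (c - e) • v + (d - e) • w = 0 := by
        rw [sub_smul, sub_smul, smul_add] at *
        abel_nf
        abel_nf at he
        linear_combination (norm := abel) he
      have hde : d = e := by
        by_contra hne
        apply hdep
        refine ⟨(e - c) / (d - e), ?_⟩
        have h3 : (d - e) • w = (e - c) • v := by
          linear_combination (norm := module) key
        rw [div_eq_inv_mul, ← smul_smul, ← h3, smul_smul,
          inv_mul_cancel₀ (sub_ne_zero.mpr hne), one_smul]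
      have hce : c = e := by
        rw [hde, sub_self, zero_smul, add_zero] at key
        have := (smul_eq_zero.mp key).resolve_right hv
        linarith [sub_eq_zero.mp this]
      rw [hde, hce]
  · push_neg at hV
    exact ⟨0, by ext w; simp [hV (B w)]⟩

theorem stmt_9 (V : Type*) [AddCommGroup V] [Module ℝ V] [FiniteDimensional ℝ V]
    (B : V →ₗ[ℝ] V)
    (h : ∀ b : V →ₗ[ℝ] V →ₗ[ℝ] ℝ, (∀ X Y, b X Y = b Y X) →
      ∀ X Y, b X (B Y) = b (B X) Y) :
    ∃ c : ℝ, B = c • LinearMap.id := by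
  apply aux_all_eigen
  intro v
  -- B v ∈ span {v}
  have hmem : B v ∈ Submodule.span ℝ {v} := by
    rw [← Subspace.forall_mem_dualAnnihilator_apply_eq_zero_iff]
    intro f hf
    rw [Submodule.mem_dualAnnihilator] at hf
    have hfv : f v = 0 := hf v (Submodule.mem_span_singleton_self v)
    by_cases hf0 : f = 0
    · simp [hf0]
    · obtain ⟨X, hX⟩ : ∃ X, f X ≠ 0 := by
        by_contra hc; push_neg at hc
        exact hf0 (LinearMap.ext fun x => hc x)
      set b : V →ₗ[ℝ] V →ₗ[ℝ] ℝ := LinearMap.mk₂ ℝ (fun x y => f x * f y)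
        (fun x y z => by simp [add_mul]) (fun a x y => by simp [mul_assoc])
        (fun x y z => by simp [mul_add]) (fun a x y => by
          simp [mul_comm, mul_assoc, mul_left_comm]) with hb
      have hsym : ∀ X Y, b X Y = b Y X := fun X Y => by simp [hb, mul_comm]
      have := h b hsym X v
      simp only [hb, LinearMap.mk₂_apply, hfv, mul_zero] at this
      exact (mul_eq_zero.mp this).resolve_left hX
  rw [Submodule.mem_span_singleton] at hmem
  obtain ⟨c, hc⟩ := hmem
  exact ⟨c, hc.symm⟩
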